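/- Let G₁ and G₂ be looped simple graphs on the same vertex set V, with adjacency matrices A₁, A₂ over GF(2). If for every vertex v and every type ι∈{φ,χ,ψ} the column of IAS(G₁)=(I|A₁|I+A₁) indexed by (v,ι) determines the same fundamental-circuit data as the corresponding column of IAS(G₂), i.e. if the identity map on the ground set V×{φ,χ,ψ} is an isomorphism of the binary matroids M(IAS(G₁)) and M(IAS(G₂)), then A₁ = A₂, i.e. G₁ = G₂. -/

import Mathlib

/-- The three column types of the matrix `IAS(G) = (I | A | I+A)`. -/
inductive GType : Type
  | phi | chi | psi
  deriving DecidableEq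

instance instFintypeGType : Fintype GType :=
  ⟨{GType.phi, GType.chi, GType.psi}, fun x => by cases x <;> simp⟩

/-- The column of `IAS(G) = (I | A(G) | I+A(G))` indexed by a ground set element of
`W(G) = V × {φ, χ, ψ}`. -/
def iasCol {V : Type} [DecidableEq V] (A : Matrix V V (ZMod 2)) : V × GType → V → ZMod 2
  | (v, GType.phi) => fun w => if w = v then 1 else 0
  | (v, GType.chi) => fun w => A w v
  | (v, GType.psi) => fun w => (if w = v then 1 else 0) + A w v

/-- Independence in the binary matroid `M(IAS(G))`: a set of ground elements is independent
iff the corresponding columns of `IAS(G)` are linearly independent over `GF(2)`. -/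
def IasIndep {V : Type} [DecidableEq V] (A : Matrix V V (ZMod 2))
    (S : Set (V × GType)) : Prop :=
  LinearIndependent (ZMod 2) (fun p : S => iasCol A p.1)

/-- A circuit of `M(IAS(G))`: a minimal dependent set. -/
def IasCircuit {V : Type} [DecidableEq V] (A : Matrix V V (ZMod 2))
    (C : Set (V × GType)) : Prop :=
  ¬ IasIndep A C ∧ ∀ D : Set (V × GType), D ⊂ C → IasIndep A D

/-- The rank of a subset of the ground set of `M(IAS(G))`: the `GF(2)`-rank of the
corresponding set of columns of `IAS(G)`. -/
noncomputable def iasRk {V : Type} [Fintype V] [DecidableEq V] (A : Matrix V V (ZMod 2))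
    (S : Set (V × GType)) : ℕ :=
  Module.finrank (ZMod 2) (Submodule.span (ZMod 2) (iasCol A '' S))

lemma ias_key {V : Type} [Fintype V] [DecidableEq V] (A : Matrix V V (ZMod 2)) (w v : V) :
    IasIndep A {p : V × GType | (p.2 = GType.phi ∧ p.1 ≠ w) ∨ p = (v, GType.chi)} ↔
      A w v = 1 := by
  classical
  set S : Set (V × GType) :=
    {p | (p.2 = GType.phi ∧ p.1 ≠ w) ∨ p = (v, GType.chi)} with hS
  have hmem1 : ∀ u : {u : V // u ≠ w}, ((u.1, GType.phi) : V × GType) ∈ S :=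
    fun u => Or.inl ⟨rfl, u.2⟩
  have hmem2 : ((v, GType.chi) : V × GType) ∈ S := Or.inr rfl
  let F : {u : V // u ≠ w} ⊕ Unit → S :=
    fun i => Sum.elim (fun u => ⟨(u.1, GType.phi), hmem1 u⟩)
      (fun _ => ⟨(v, GType.chi), hmem2⟩) i
  have hFbij : Function.Bijective F := by
    constructor
    · rintro (a | a) (b | b) hab <;>
        simp only [F, Sum.elim_inl, Sum.elim_inr, Subtype.mk.injEq,
          Prod.mk.injEq] at hab ⊢
      · exact congrArg Sum.inl (Subtype.ext hab.1)
      · exact absurd hab.2 (by simp)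
      · exact absurd hab.2 (by simp)
    · rintro ⟨p, hp⟩
      rcases hp with ⟨hφ, hw⟩ | hp
      · refine ⟨Sum.inl ⟨p.1, hw⟩, ?_⟩
        apply Subtype.ext
        simp only [F, Sum.elim_inl]
        exact (Prod.ext_iff.mpr ⟨rfl, hφ.symm⟩ : ((p.1, GType.phi) : V × GType) = p)
      · exact ⟨Sum.inr (), Subtype.ext (by simp [F, hp])⟩
  let E : ({u : V // u ≠ w} ⊕ Unit) ≃ S := Equiv.ofBijective F hFbij
  have hsum : ∀ (g : S → ZMod 2) (x : V),
      (∑ p : S, g p • iasCol A p.1) x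
        = (∑ u : {u : V // u ≠ w},
            g (F (Sum.inl u)) * (if x = u.1 then 1 else 0))
          + g (F (Sum.inr ())) * A x v := by
    intro g x
    rw [Finset.sum_apply]
    rw [← Equiv.sum_comp E (fun p : S => (g p • iasCol A p.1) x)]
    rw [Fintype.sum_sum_type]
    simp [E, F, iasCol, mul_comm]
  constructor
  · intro hindep
    by_contra hne
    have hA0 : A w v = 0 := by
      have : ∀ x : ZMod 2, x ≠ 1 → x = 0 := by decide
      exact this _ hne
    rw [IasIndep, Fintype.linearIndependent_iff] at hindep
    set g : S → ZMod 2 :=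
      fun p => if (p : V × GType).2 = GType.chi then 1
        else A (p : V × GType).1 v with hg
    have hzero : ∑ p : S, g p • iasCol A p.1 = 0 := by
      funext x
      simp only [Pi.zero_apply]
      rw [hsum g x]
      have hg1 : g (F (Sum.inr ())) = 1 := by simp [g, F]
      have hg2 : ∀ u : {u : V // u ≠ w}, g (F (Sum.inl u)) = A u.1 v := by
        intro u; simp [g, F]
      rw [hg1, one_mul]
      by_cases hx : x = w
      · have hz : ∀ u : {u : V // u ≠ w},
            g (F (Sum.inl u)) * (if x = u.1 then 1 else 0) = 0 := by
          intro u
          have : ¬ (x = u.1) := fun h => u.2 (by rw [← h, hx])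
          simp [this]
        rw [Finset.sum_eq_zero (fun u _ => hz u), hx, hA0]
        simp
      · rw [Fintype.sum_eq_single (⟨x, hx⟩ : {u : V // u ≠ w})]
        · rw [hg2]
          have h2 : ∀ a : ZMod 2, a + a = 0 := by decide
          simpa using h2 (A x v)
        · intro u hu
          have : ¬ (x = u.1) := fun h => hu (Subtype.ext h.symm)
          simp [this]
    have := hindep g hzero (F (Sum.inr ()))
    simp [g, F] at this
  · intro hA1
    rw [IasIndep, Fintype.linearIndependent_iff]
    intro g hg i
    have hzero : ∀ x : V, (∑ p : S, g p • iasCol A p.1) x = 0 := by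
      intro x; rw [hg]; rfl
    have hchi : g (F (Sum.inr ())) = 0 := by
      have h1 := hzero w
      rw [hsum g w] at h1
      have hz : ∀ u : {u : V // u ≠ w},
          g (F (Sum.inl u)) * (if w = u.1 then 1 else 0) = 0 := by
        intro u
        have : ¬ (w = u.1) := fun h => u.2 h.symm
        simp [this]
      rw [Finset.sum_eq_zero (fun u _ => hz u), hA1] at h1
      simpa using h1
    obtain ⟨j, rfl⟩ := hFbij.2 i
    rcases j with u | u
    · have h1 := hzero u.1
      rw [hsum g u.1] at h1
      rw [Fintype.sum_eq_single u] at h1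
      · rw [hchi] at h1
        simpa using h1
      · intro b hb
        have : ¬ ((u.1 : V) = b.1) := fun h => hb (Subtype.ext h.symm)
        simp [this]
    · exact hchi

/-- if the identity map of the ground set `W(G) = V × {φ,χ,ψ}` is an
isomorphism between the isotropic matroids of two looped simple graphs on the same vertex
set (i.e. the two matroids have the same independent sets), then the graphs are equal. -/
theorem identity_compatible_isomorphism_eq {V : Type} [Fintype V] [DecidableEq V]
    (A₁ A₂ : Matrix V V (ZMod 2)) (h₁ : A₁.IsSymm) (h₂ : A₂.IsSymm)
    (h : ∀ S : Set (V × GType), IasIndep A₁ S ↔ IasIndep A₂ S) :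
    A₁ = A₂ := by
  ext w v
  have key := (ias_key A₁ w v).symm.trans
    ((h _).trans (ias_key A₂ w v))
  have : ∀ a b : ZMod 2, (a = 1 ↔ b = 1) → a = b := by decide
  exact this _ _ key
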